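/- Let AF = (A, R) be a Dung argumentation framework and Γ_AF = A ∪ { a ↣ b : (a,b) ∈ R }. If S ⊆ A is a stable extension of AF (i.e., S = A \ Defeated(S), where Defeated(S) = { a : ∃ b ∈ S, (b,a) ∈ R }), and I is the total HT-interpretation with V⁺ = A and V⁻ = Defeated(S) at both worlds, then I is an equilibrium model of Γ_AF. -/
import Mathlib


inductive Formula (Atom : Type) : Type
  | bot : Formula Atom
  | atom : Atom → Formula Atom
  | sneg : Formula Atom → Formula Atom
  | conj : Formula Atom → Formula Atom → Formula Atom
  | disj : Formula Atom → Formula Atom → Formula Atom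
  | impl : Formula Atom → Formula Atom → Formula Atom

structure NelsonInterp (Atom : Type) where
  W : Type
  le : W → W → Prop
  refl : ∀ w, le w w
  trans : ∀ {w₁ w₂ w₃}, le w₁ w₂ → le w₂ w₃ → le w₁ w₃
  Vp : W → Set Atom
  Vm : W → Set Atom
  monoP : ∀ {w w'}, le w w' → Vp w ⊆ Vp w'
  monoM : ∀ {w w'}, le w w' → Vm w ⊆ Vm w'

mutual
  def forceP {Atom : Type} (I : NelsonInterp Atom) (w : I.W) : Formula Atom → Prop
    | .bot => False
    | .atom a => a ∈ I.Vp w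
    | .sneg φ => forceM I w φ
    | .conj φ ψ => forceP I w φ ∧ forceP I w ψ
    | .disj φ ψ => forceP I w φ ∨ forceP I w ψ
    | .impl φ ψ => ∀ w', I.le w w' → (¬ forceP I w' φ ∨ forceP I w' ψ)
  def forceM {Atom : Type} (I : NelsonInterp Atom) (w : I.W) : Formula Atom → Prop
    | .bot => True
    | .atom a => a ∈ I.Vm w
    | .sneg φ => forceP I w φ
    | .conj φ ψ => forceM I w φ ∨ forceM I w ψ
    | .disj φ ψ => forceM I w φ ∧ forceM I w ψ
    | .impl φ ψ => forceP I w φ ∧ forceM I w ψ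
end

def Formula.neg {Atom : Type} (φ : Formula Atom) : Formula Atom := φ.impl .bot

def Formula.supImp {Atom : Type} (φ ψ : Formula Atom) : Formula Atom :=
  ((φ.sneg.neg).conj φ).impl ψ

def Formula.attack {Atom : Type} (φ ψ : Formula Atom) : Formula Atom :=
  φ.supImp ψ.sneg

/-- cw-inference at a world: `I,w ⊨ φ` iff `I,w ⊩⁺ ¬~φ ∧ φ`. -/
def cw {Atom : Type} (I : NelsonInterp Atom) (w : I.W) (φ : Formula Atom) : Prop :=
  forceP I w ((φ.sneg.neg).conj φ)

/-- `I ⊩⁺ φ` : forcing at all worlds. -/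
def forcedP {Atom : Type} (I : NelsonInterp Atom) (φ : Formula Atom) : Prop :=
  ∀ w, forceP I w φ

def forcedM {Atom : Type} (I : NelsonInterp Atom) (φ : Formula Atom) : Prop :=
  ∀ w, forceM I w φ

/-- `I ⊨ φ` : cw-inference at all worlds. -/
def cwAll {Atom : Type} (I : NelsonInterp Atom) (φ : Formula Atom) : Prop :=
  ∀ w, cw I w φ

def NelsonInterp.Consistent {Atom : Type} (I : NelsonInterp Atom) : Prop :=
  ∀ w, I.Vp w ∩ I.Vm w = ∅

/-- An HT-interpretation: two worlds h ≤ t, given by four sets of atoms. -/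
structure HTInterp (Atom : Type) where
  Hp : Set Atom
  Hm : Set Atom
  Tp : Set Atom
  Tm : Set Atom
  subP : Hp ⊆ Tp
  subM : Hm ⊆ Tm

/-- The underlying Nelson interpretation: world `false` is h, world `true` is t. -/
def HTInterp.toNelson {Atom : Type} (I : HTInterp Atom) : NelsonInterp Atom where
  W := Bool
  le := (· ≤ ·)
  refl := le_refl
  trans := le_trans
  Vp := fun w => if w then I.Tp else I.Hp
  Vm := fun w => if w then I.Tm else I.Hm
  monoP := by
    intro w w' hle
    match w, w', hle with
    | false, false, _ => exact subset_rfl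
    | false, true, _ => exact I.subP
    | true, true, _ => exact subset_rfl
    | true, false, h => exact absurd h (by decide)
  monoM := by
    intro w w' hle
    match w, w', hle with
    | false, false, _ => exact subset_rfl
    | false, true, _ => exact I.subM
    | true, true, _ => exact subset_rfl
    | true, false, h => exact absurd h (by decide)


def isHTModel {Atom : Type} (I : HTInterp Atom) (Γ : Set (Formula Atom)) : Prop :=
  ∀ φ ∈ Γ, ∀ w : Bool, forceP I.toNelson w φ

/-- The arguments consistently accepted by `I` among the arguments `A`. -/
def SI {Atom : Type} (I : HTInterp Atom) (A : Set Atom) : Set Atom :=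
  { a ∈ A | cwAll I.toNelson (Formula.atom a) }

/-- `I` is total and a ≤-minimal HT-model among models with the same `t`-valuations. -/
def Equilibrium {Atom : Type} (I : HTInterp Atom) (Γ : Set (Formula Atom)) : Prop :=
  I.Hp = I.Tp ∧ I.Hm = I.Tm ∧ isHTModel I Γ ∧
    ∀ J : HTInterp Atom, J.Tp = I.Tp → J.Tm = I.Tm → isHTModel J Γ →
      J.Hp = I.Tp ∧ J.Hm = I.Tm

/-- Translation of the Dung framework `(A, R)`. -/
def ThAF {Atom : Type} (A : Set Atom) (R : Atom → Atom → Prop) : Set (Formula Atom) :=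
  (Formula.atom '' A) ∪
    { f | ∃ a b, R a b ∧ f = (Formula.atom a).attack (Formula.atom b) }

def Defeated {Atom : Type} (R : Atom → Atom → Prop) (S : Set Atom) : Set Atom :=
  { a | ∃ b ∈ S, R b a }


lemma forceP_attack_iff {Atom : Type} (I : HTInterp Atom) (a b : Atom) (w : Bool) :
    forceP I.toNelson w ((Formula.atom a).attack (Formula.atom b)) ↔
      ∀ w' : Bool, w ≤ w' →
        (¬ ((∀ w'' : Bool, w' ≤ w'' → a ∉ (if w'' then I.Tm else I.Hm)) ∧
            a ∈ (if w' then I.Tp else I.Hp)) ∨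
          b ∈ (if w' then I.Tm else I.Hm)) := by
  simp only [Formula.attack, Formula.supImp, Formula.neg, forceP, forceM,
    HTInterp.toNelson, or_false]

theorem af_stable_to_equilibrium {Atom : Type} (A : Set Atom)
    (R : Atom → Atom → Prop) (hR : ∀ a b, R a b → a ∈ A ∧ b ∈ A)
    (S : Set Atom) (hS : S = A \ Defeated R S) :
    Equilibrium
      ⟨A, Defeated R S, A, Defeated R S, subset_rfl, subset_rfl⟩
      (ThAF A R) := by
  set D := Defeated R S with hD
  have hSmem : ∀ a, a ∈ S ↔ a ∈ A ∧ a ∉ D := by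
    intro a; rw [hS]; exact Iff.rfl
  refine ⟨rfl, rfl, ?_, ?_⟩
  · intro φ hφ w
    rcases hφ with ⟨a, ha, rfl⟩ | ⟨a, b, hab, rfl⟩
    · show a ∈ (if w then A else A)
      simpa using ha
    · rw [forceP_attack_iff]
      intro w' _
      by_cases hmem : (∀ w'' : Bool, w' ≤ w'' → a ∉ (if w'' then D else D)) ∧
          a ∈ (if w' then A else A)
      · right
        have haD : a ∉ D := by simpa using hmem.1 w' le_rfl
        have haA : a ∈ A := by cases w' <;> simpa using hmem.2
        have haS : a ∈ S := (hSmem a).2 ⟨haA, haD⟩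
        have : b ∈ D := ⟨a, haS, hab⟩
        cases w' <;> simpa using this
      · left; exact hmem
  · intro J hTp hTm hMod
    have hTp' : J.Tp = A := hTp
    have hTm' : J.Tm = D := hTm
    -- J.Hp = A
    have hHpA : J.Hp = A := by
      apply Set.Subset.antisymm (hTp' ▸ J.subP)
      intro a ha
      have := hMod (Formula.atom a) (Or.inl ⟨a, ha, rfl⟩) false
      simpa [forceP, HTInterp.toNelson] using this
    refine ⟨hHpA, ?_⟩
    apply Set.Subset.antisymm (hTm' ▸ J.subM)
    intro b hb
    rcases hb with ⟨a, haS, hab⟩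
    have haA : a ∈ A := ((hSmem a).1 haS).1
    have haD : a ∉ D := ((hSmem a).1 haS).2
    have hatt := hMod ((Formula.atom a).attack (Formula.atom b))
      (Or.inr ⟨a, b, hab, rfl⟩) false
    rw [forceP_attack_iff] at hatt
    have := hatt false (le_refl _)
    rcases this with h | h
    · exfalso; apply h
      constructor
      · intro w'' _
        have hsub : J.Hm ⊆ D := hTm' ▸ J.subM
        cases w''
        · simpa using fun hm => haD (hsub hm)
        · simpa [hTm'] using haD
      · simpa [hHpA] using haA
    · show b ∈ (if false then J.Tm else J.Hm)
      exact h
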